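/- arXiv:1807.05182 — 2 statements merged into one kernel-verified Lean document; each statement's English description precedes it below -/
import Mathlib

section
/- Let Σ be the 4N×4N block matrix Σ = [[I⊗I₂, −τ(D⊗J₂ᵀ)], [−τ(D³⊗J₂ᵀ), I⊗I₂]] with D diagonal, τ ∈ ℝ, and J₂ = [[0,1],[−1,0]]. Then Σ is invertible with Σ⁻¹ = [[D₁⊗I₂, τ(D₁D⊗J₂ᵀ)], [τ(D₁D³⊗J₂ᵀ), D₁⊗I₂]], where D₁ = (I + τ²D⁴)⁻¹. -/
open Matrix
open scoped Kronecker

private lemma kron_neg_one {n : Type*} (A : Matrix n n ℝ) :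
    A ⊗ₖ (-1 : Matrix (Fin 2) (Fin 2) ℝ) = -(A ⊗ₖ (1 : Matrix (Fin 2) (Fin 2) ℝ)) := by
  ext ⟨i, a⟩ ⟨j, b⟩
  simp [Matrix.kroneckerMap_apply, mul_neg]

private lemma neg_kron {n m : Type*} (A : Matrix n n ℝ) (B : Matrix m m ℝ) :
    -(A ⊗ₖ B) = (-A) ⊗ₖ B := by
  ext ⟨i, a⟩ ⟨j, b⟩
  simp [Matrix.kroneckerMap_apply]

/-- the block matrix
`Σ = [[I⊗I₂, −τ(D⊗J₂ᵀ)], [−τ(D³⊗J₂ᵀ), I⊗I₂]]`, with `D` diagonal and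
`J₂ = [[0,1],[−1,0]]`, is invertible with
`Σ⁻¹ = [[D₁⊗I₂, τ(D₁D⊗J₂ᵀ)], [τ(D₁D³⊗J₂ᵀ), D₁⊗I₂]]`, `D₁ = (I+τ²D⁴)⁻¹`. -/
theorem Sigma_inverse (N : ℕ) (hN : 1 ≤ N) (d : Fin N → ℝ) (τ : ℝ) :
    ∀ D : Matrix (Fin N) (Fin N) ℝ, D = Matrix.diagonal d →
    ∀ D₁ : Matrix (Fin N) (Fin N) ℝ, D₁ = (1 + τ^2 • D^4)⁻¹ →
    ∀ J₂ : Matrix (Fin 2) (Fin 2) ℝ, J₂ = !![(0:ℝ), 1; -1, 0] →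
      (Matrix.fromBlocks
          (1 : Matrix (Fin N × Fin 2) (Fin N × Fin 2) ℝ) (-(τ • (D ⊗ₖ J₂ᵀ)))
          (-(τ • ((D^3) ⊗ₖ J₂ᵀ))) 1)
        * (Matrix.fromBlocks
          (D₁ ⊗ₖ (1 : Matrix (Fin 2) (Fin 2) ℝ)) (τ • ((D₁ * D) ⊗ₖ J₂ᵀ))
          (τ • ((D₁ * D^3) ⊗ₖ J₂ᵀ)) (D₁ ⊗ₖ (1 : Matrix (Fin 2) (Fin 2) ℝ)))
        = 1
      ∧ (Matrix.fromBlocks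
          (D₁ ⊗ₖ (1 : Matrix (Fin 2) (Fin 2) ℝ)) (τ • ((D₁ * D) ⊗ₖ J₂ᵀ))
          (τ • ((D₁ * D^3) ⊗ₖ J₂ᵀ)) (D₁ ⊗ₖ (1 : Matrix (Fin 2) (Fin 2) ℝ)))
        * (Matrix.fromBlocks
          (1 : Matrix (Fin N × Fin 2) (Fin N × Fin 2) ℝ) (-(τ • (D ⊗ₖ J₂ᵀ)))
          (-(τ • ((D^3) ⊗ₖ J₂ᵀ))) 1)
        = 1 := by
  intro D hD D₁ hD₁ J₂ hJ
  subst hD hJ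
  -- D₁ is diagonal
  set e : Fin N → ℝ := fun i => (1 + τ^2 * (d i)^4)⁻¹ with he
  have hpos : ∀ i, 0 < 1 + τ^2 * (d i)^4 := fun i => by positivity
  have hsum : (1 : Matrix (Fin N) (Fin N) ℝ) + τ^2 • (Matrix.diagonal d)^4
      = Matrix.diagonal (fun i => 1 + τ^2 * (d i)^4) := by
    ext i j
    by_cases h : i = j <;>
      simp [Matrix.diagonal_pow, Matrix.diagonal_apply, Matrix.one_apply, h, smul_eq_mul]
  have hmul : (1 + τ^2 • (Matrix.diagonal d)^4) * Matrix.diagonal e = 1 := by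
    rw [hsum, Matrix.diagonal_mul_diagonal, ← Matrix.diagonal_one]
    rw [Matrix.diagonal_eq_diagonal_iff]
    exact fun i => mul_inv_cancel₀ (hpos i).ne'
  have hD₁' : D₁ = Matrix.diagonal e := hD₁.trans (Matrix.inv_eq_right_inv hmul)
  subst hD₁'
  have hJJ : (!![(0:ℝ), 1; -1, 0])ᵀ * (!![(0:ℝ), 1; -1, 0])ᵀ = -1 := by
    ext i j
    fin_cases i <;> fin_cases j <;>
      simp [Matrix.mul_apply, Fin.sum_univ_two, Matrix.one_apply, Matrix.transpose_apply,
        Matrix.vecHead, Matrix.vecTail] <;> norm_num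
  have hscal : ∀ i, e i + τ^2 * ((d i) * (e i * (d i)^3)) = 1 := by
    intro i
    have h := (hpos i).ne'
    rw [he]
    field_simp
  have hdiag : Matrix.diagonal e + (τ * τ) • (Matrix.diagonal d * (Matrix.diagonal e * Matrix.diagonal d ^ 3)) = 1 := by
    ext i j
    by_cases h : i = j <;>
      simp [Matrix.diagonal_pow, Matrix.diagonal_mul_diagonal, Matrix.diagonal_apply,
        Matrix.one_apply, h, smul_eq_mul]
    subst h
    nlinarith [hscal i]
  constructor <;>
  · rw [← Matrix.fromBlocks_one]
    simp only [Matrix.fromBlocks_multiply, Matrix.one_mul, Matrix.mul_one, Matrix.neg_mul,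
      Matrix.mul_neg, Matrix.smul_mul, Matrix.mul_smul, smul_smul, smul_neg, neg_neg,
      Matrix.mul_kronecker_mul, hJJ]
    simp only [← Matrix.mul_kronecker_mul, hJJ, Matrix.mul_one, Matrix.one_mul,
      Matrix.diagonal_pow, Matrix.diagonal_mul_diagonal, kron_neg_one, neg_neg,
      ← Matrix.smul_kronecker, ← Matrix.add_kronecker, neg_kron, smul_neg, neg_neg]
    ext x y
    rcases x with ⟨i, a⟩ | ⟨i, a⟩ <;> rcases y with ⟨j, b⟩ | ⟨j, b⟩ <;>
      by_cases h : i = j <;>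
      simp [Matrix.kroneckerMap_apply, Matrix.diagonal_apply, Matrix.one_apply, h,
        Pi.pow_apply, mul_comm, Matrix.smul_apply]
    all_goals
      split_ifs with hab
      · have h0 := hscal j
        rw [he] at h0 ⊢
        nlinarith [h0]
      · rfl
end

section
/- The traveling wave u(x,t) = 1/2 − A·sech²(√(A/6)·(x + ct − ξ₀)) with c² = 1 − (2/3)A is an exact solution of u_tt = −u_xxxx + (u²)_xx. -/
noncomputable def Fw (A : ℝ) (z : ℝ) : ℝ := 1/2 - A * (1 / Real.cosh z)^2
noncomputable def Fw1 (A : ℝ) (z : ℝ) : ℝ := 2*A*Real.sinh z / Real.cosh z ^ 3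
noncomputable def Fw2 (A : ℝ) (z : ℝ) : ℝ := 2*A*(-2/Real.cosh z^2 + 3/Real.cosh z^4)
noncomputable def Fw3 (A : ℝ) (z : ℝ) : ℝ :=
  2*A*(4*Real.sinh z/Real.cosh z^3 - 12*Real.sinh z/Real.cosh z^5)
noncomputable def Fw4 (A : ℝ) (z : ℝ) : ℝ :=
  2*A*(-8/Real.cosh z^2 + 60/Real.cosh z^4 - 60/Real.cosh z^6)
noncomputable def Gw1 (A : ℝ) (z : ℝ) : ℝ := 2 * (Fw A z * Fw1 A z)
noncomputable def Gw2 (A : ℝ) (z : ℝ) : ℝ :=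
  8*A^2*(1/Real.cosh z^4 - 1/Real.cosh z^6) + 2 * Fw A z * Fw2 A z

lemma hFw (A : ℝ) (z : ℝ) : HasDerivAt (Fw A) (Fw1 A z) z := by
  have hC : Real.cosh z ≠ 0 := (Real.cosh_pos z).ne'
  have h := ((((hasDerivAt_const z (1:ℝ)).div (Real.hasDerivAt_cosh z) hC).pow 2).const_mul A).const_sub (1/2)
  refine h.congr_deriv ?_
  unfold Fw1; simp only [Pi.div_apply, Pi.pow_apply, show (2:ℕ) - 1 = 1 from rfl, pow_one]; field_simp; ring

lemma hFw1 (A : ℝ) (z : ℝ) : HasDerivAt (Fw1 A) (Fw2 A z) z := by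
  have hC : Real.cosh z ≠ 0 := (Real.cosh_pos z).ne'
  have h := ((Real.hasDerivAt_sinh z).const_mul (2*A)).div ((Real.hasDerivAt_cosh z).pow 3)
    (pow_ne_zero 3 hC)
  refine h.congr_deriv ?_
  have h2 := Real.sinh_sq z
  unfold Fw2
  simp only [Pi.div_apply, Pi.pow_apply]
  field_simp
  linear_combination (-3*A*Real.cosh z^2) * h2

lemma hFw2 (A : ℝ) (z : ℝ) : HasDerivAt (Fw2 A) (Fw3 A z) z := by
  have hC : Real.cosh z ≠ 0 := (Real.cosh_pos z).ne'
  have h := ((((hasDerivAt_const z (-2:ℝ)).div ((Real.hasDerivAt_cosh z).pow 2)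
      (pow_ne_zero 2 hC)).add ((hasDerivAt_const z (3:ℝ)).div
      ((Real.hasDerivAt_cosh z).pow 4) (pow_ne_zero 4 hC))).const_mul (2*A))
  refine h.congr_deriv ?_
  unfold Fw3; simp only [Pi.div_apply, Pi.pow_apply]; field_simp; ring

lemma hFw3 (A : ℝ) (z : ℝ) : HasDerivAt (Fw3 A) (Fw4 A z) z := by
  have hC : Real.cosh z ≠ 0 := (Real.cosh_pos z).ne'
  have h := (((((Real.hasDerivAt_sinh z).const_mul (4:ℝ)).div
      ((Real.hasDerivAt_cosh z).pow 3) (pow_ne_zero 3 hC)).sub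
      (((Real.hasDerivAt_sinh z).const_mul (12:ℝ)).div
      ((Real.hasDerivAt_cosh z).pow 5) (pow_ne_zero 5 hC))).const_mul (2*A))
  refine h.congr_deriv ?_
  have h2 := Real.sinh_sq z
  unfold Fw4
  simp only [Pi.div_apply, Pi.pow_apply]
  field_simp
  linear_combination (A*(60*Real.cosh z^4 - 12*Real.cosh z^6)) * h2

lemma hGw (A : ℝ) (z : ℝ) : HasDerivAt (fun z => Fw A z ^ 2) (Gw1 A z) z :=
  ((hFw A z).pow 2).congr_deriv (by unfold Gw1; push_cast; ring)

lemma hGw1 (A : ℝ) (z : ℝ) : HasDerivAt (Gw1 A) (Gw2 A z) z := by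
  have hC : Real.cosh z ≠ 0 := (Real.cosh_pos z).ne'
  have h := ((hFw A z).mul (hFw1 A z)).const_mul 2
  refine h.congr_deriv ?_
  have h2 := Real.sinh_sq z
  unfold Gw2 Fw Fw1 Fw2
  field_simp
  linear_combination (8*A^2) * h2

lemma deriv_affine {f f' : ℝ → ℝ} (hf : ∀ z, HasDerivAt f (f' z) z) (a b : ℝ) :
    (deriv fun s => f (a * s + b)) = fun s => a * f' (a * s + b) := by
  funext t
  have h : HasDerivAt (fun s : ℝ => a * s + b) a t := by
    simpa using ((hasDerivAt_id t).const_mul a).add_const b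
  have H : HasDerivAt (fun s => f (a*s+b)) (a * f' (a*t+b)) t :=
    ((hf (a*t+b)).comp t h).congr_deriv (mul_comm _ _)
  exact H.deriv

lemma deriv_affine' {f f' : ℝ → ℝ} (hf : ∀ z, HasDerivAt f (f' z) z) (a b C : ℝ) :
    (deriv fun s => C * f (a * s + b)) = fun s => (C * a) * f' (a * s + b) := by
  funext t
  have h : HasDerivAt (fun s : ℝ => a * s + b) a t := by
    simpa using ((hasDerivAt_id t).const_mul a).add_const b
  have H : HasDerivAt (fun s => C * f (a*s+b)) ((C*a) * f' (a*t+b)) t :=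
    (((hf (a*t+b)).comp t h).const_mul C).congr_deriv (by ring)
  exact H.deriv

lemma iter2_affine {f f1 f2 : ℝ → ℝ} (h1 : ∀ z, HasDerivAt f (f1 z) z)
    (h2 : ∀ z, HasDerivAt f1 (f2 z) z) (a b t : ℝ) :
    iteratedDeriv 2 (fun s => f (a*s+b)) t = a^2 * f2 (a*t+b) := by
  rw [iteratedDeriv_succ, iteratedDeriv_one, deriv_affine h1]
  have : (fun s => a * f1 (a * s + b)) = fun s => a * f1 (a*s+b) := rfl
  rw [show (fun s => a * f1 (a * s + b)) = fun s => a * f1 (a*s+b) from rfl,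
    deriv_affine' h2 a b a]
  show (a*a) * f2 (a*t+b) = a^2 * f2 (a*t+b)
  ring

lemma iter4_affine {f f1 f2 f3 f4 : ℝ → ℝ} (h1 : ∀ z, HasDerivAt f (f1 z) z)
    (h2 : ∀ z, HasDerivAt f1 (f2 z) z) (h3 : ∀ z, HasDerivAt f2 (f3 z) z)
    (h4 : ∀ z, HasDerivAt f3 (f4 z) z) (a b t : ℝ) :
    iteratedDeriv 4 (fun s => f (a*s+b)) t = a^4 * f4 (a*t+b) := by
  rw [iteratedDeriv_succ, iteratedDeriv_succ, iteratedDeriv_succ, iteratedDeriv_one,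
    deriv_affine h1, deriv_affine' h2 a b a, deriv_affine' h3 a b (a*a),
    deriv_affine' h4 a b (a*a*a)]
  show (a*a*a*a) * f4 (a*t+b) = a^4 * f4 (a*t+b)
  ring

/-- the traveling wave
`u(x,t) = 1/2 − A·sech²(√(A/6)(x + ct − ξ₀))`, with `c² = 1 − (2/3)A`,
is an exact solution of `u_tt = −u_xxxx + (u²)_xx`. -/
theorem solitary_wave_solution (A c ξ₀ : ℝ) (hA : 0 < A) (hA' : A < 3/2)
    (hc : c^2 = 1 - (2/3) * A)
    (u : ℝ → ℝ → ℝ)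
    (hu : ∀ x t, u x t =
      1/2 - A * (1 / Real.cosh (Real.sqrt (A/6) * (x + c*t - ξ₀)))^2) :
    ∀ x t, iteratedDeriv 2 (fun s => u x s) t =
      - iteratedDeriv 4 (fun y => u y t) x
      + iteratedDeriv 2 (fun y => (u y t)^2) x := by
  intro x t
  set k := Real.sqrt (A/6) with hk
  have hk2 : k^2 = A/6 := Real.sq_sqrt (by positivity)
  have ht : (fun s => u x s) = fun s => Fw A ((k*c)*s + (k*x - k*ξ₀)) := by
    funext s
    rw [hu, show k * (x + c*s - ξ₀) = (k*c)*s + (k*x - k*ξ₀) by ring]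
    rfl
  have hx : (fun y => u y t) = fun y => Fw A (k*y + (k*c*t - k*ξ₀)) := by
    funext y
    rw [hu, show k * (y + c*t - ξ₀) = k*y + (k*c*t - k*ξ₀) by ring]
    rfl
  have hx2 : (fun y => (u y t)^2) = fun y => (fun z => Fw A z ^ 2) (k*y + (k*c*t - k*ξ₀)) := by
    funext y
    rw [hu, show k * (y + c*t - ξ₀) = k*y + (k*c*t - k*ξ₀) by ring]
    rfl
  rw [ht, hx, hx2, iter2_affine (hFw A) (hFw1 A),
    iter4_affine (hFw A) (hFw1 A) (hFw2 A) (hFw3 A),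
    iter2_affine (hGw A) (hGw1 A),
    show (k*c)*t + (k*x - k*ξ₀) = k*x + (k*c*t - k*ξ₀) by ring]
  set z := k*x + (k*c*t - k*ξ₀) with hz
  have hC : Real.cosh z ≠ 0 := (Real.cosh_pos z).ne'
  have hkc : (k*c)^2 = (1 - (2/3)*A) * (A/6) := by rw [mul_pow, hk2, hc]; ring
  have hk4 : k^4 = (A/6)^2 := by rw [show k^4 = (k^2)^2 by ring, hk2]
  rw [hkc, hk4, hk2]
  unfold Gw2 Fw4 Fw2 Fw
  field_simp
  ring
end
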